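/- Let d ≥ 1, let w* ∈ ℝ^d be a vector with w*_d ≠ 0, and let b* ∈ {−1, 1}. Then there exist three labeled examples, each consistent with the halfspace H_{w*,b*}, such that for every w ∈ ℝ^d and every b ∈ {−1, 0, 1}, if H_{w,b} is consistent with these three examples then b = b*, sign(w_d) = sign(w*_d), and moreover |w_d| ≥ |w*_d| if b* = −1 while |w_d| ≤ |w*_d| if b* = 1. -/

import Mathlib

namespace PBT

variable {X : Type*}

/-- A set `L ⊆ X` is consistent with a set `T` of labeled examples
(label `true` = “+”, label `false` = “−”). -/
def Consistent (L : Set X) (T : Set (X × Bool)) : Prop :=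
  ∀ p ∈ T, (p.2 = true → p.1 ∈ L) ∧ (p.2 = false → p.1 ∉ L)

/-- `T` is a teaching set for `L` w.r.t. the concept class `𝓛`:
`L` is the only concept in `𝓛` that is consistent with `T`. -/
def IsTeachingSet (𝓛 : Set (Set X)) (L : Set X) (T : Set (X × Bool)) : Prop :=
  Consistent L T ∧ ∀ L' ∈ 𝓛, Consistent L' T → L' = L

/-- `TD L 𝓛`: least size of a finite teaching set for `L` w.r.t. `𝓛` (`⊤` if none exists). -/
noncomputable def TD (L : Set X) (𝓛 : Set (Set X)) : ℕ∞ :=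
  sInf {n : ℕ∞ | ∃ T : Finset (X × Bool), IsTeachingSet 𝓛 L ↑T ∧ n = T.card}

/-- A positive teaching set, identified with its set of (positively labeled) points. -/
def IsPosTeachingSet (𝓛 : Set (Set X)) (L : Set X) (S : Set X) : Prop :=
  S ⊆ L ∧ ∀ L' ∈ 𝓛, S ⊆ L' → L' = L

/-- least size of a finite positive teaching set for `L` w.r.t. `𝓛` (`⊤` if none exists). -/
noncomputable def TDpos (L : Set X) (𝓛 : Set (Set X)) : ℕ∞ :=
  sInf {n : ℕ∞ | ∃ S : Finset X, IsPosTeachingSet 𝓛 L ↑S ∧ n = S.card}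

/-- A strict partial order (preference relation) on concepts:
`pr L' L` means `L` is strictly preferred over `L'`. -/
def StrictPO (pr : Set X → Set X → Prop) : Prop :=
  (∀ A, ¬ pr A A) ∧ ∀ A B C : Set X, pr A B → pr B C → pr A C

/-- `PBTDord 𝓛 pr = sup_{L ∈ 𝓛} TD(L, 𝓛 \ {L' ∈ 𝓛 | pr L' L})`. -/
noncomputable def PBTDord (𝓛 : Set (Set X)) (pr : Set X → Set X → Prop) : ℕ∞ :=
  ⨆ L ∈ 𝓛, TD L {L' ∈ 𝓛 | ¬ pr L' L}

/-- preference-based teaching dimension of `𝓛`. -/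
noncomputable def PBTD (𝓛 : Set (Set X)) : ℕ∞ :=
  sInf {v : ℕ∞ | ∃ pr, StrictPO pr ∧ v = PBTDord 𝓛 pr}

/-- `PBTDposOrd 𝓛 pr = sup_{L ∈ 𝓛} TD⁺(L, 𝓛 \ {L' ∈ 𝓛 | pr L' L})`. -/
noncomputable def PBTDposOrd (𝓛 : Set (Set X)) (pr : Set X → Set X → Prop) : ℕ∞ :=
  ⨆ L ∈ 𝓛, TDpos L {L' ∈ 𝓛 | ¬ pr L' L}

/-- positive preference-based teaching dimension of `𝓛`. -/
noncomputable def PBTDpos (𝓛 : Set (Set X)) : ℕ∞ :=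
  sInf {v : ℕ∞ | ∃ pr, StrictPO pr ∧ v = PBTDposOrd 𝓛 pr}


/-- Given `w*` with `w*_d ≠ 0` and a bias `b* ∈ {−1,1}`, there exist three labeled
examples consistent with `H_{w*,b*} = {x | ⟨w*,x⟩ + b* ≥ 0}` such that any pair
`(w, b)` with `b ∈ {−1,0,1}` whose halfspace `H_{w,b}` is consistent with them
satisfies `b = b*`, `sign(w_d) = sign(w*_d)`, and `|w_d| ≥ |w*_d|` if `b* = −1`
resp. `|w_d| ≤ |w*_d|` if `b* = 1`. -/
theorem three_examples (d : ℕ) (hd : 1 ≤ d) (w : EuclideanSpace ℝ (Fin d))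
    (hwd : w (Fin.mk (d - 1) (by omega)) ≠ 0) (b : ℝ) (hb : b = -1 ∨ b = 1) :
    ∃ e₁ e₂ e₃ : EuclideanSpace ℝ (Fin d) × Bool,
      Consistent {x : EuclideanSpace ℝ (Fin d) | (0:ℝ) ≤ inner ℝ w x + b}
        ({e₁, e₂, e₃} : Set (EuclideanSpace ℝ (Fin d) × Bool)) ∧
      ∀ (w' : EuclideanSpace ℝ (Fin d)) (b' : ℝ), b' = -1 ∨ b' = 0 ∨ b' = 1 →
        Consistent {x : EuclideanSpace ℝ (Fin d) | (0:ℝ) ≤ inner ℝ w' x + b'}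
          ({e₁, e₂, e₃} : Set (EuclideanSpace ℝ (Fin d) × Bool)) →
        b' = b ∧
        Real.sign (w' (Fin.mk (d - 1) (by omega))) =
          Real.sign (w (Fin.mk (d - 1) (by omega))) ∧
        (b = -1 → |w (Fin.mk (d - 1) (by omega))| ≤ |w' (Fin.mk (d - 1) (by omega))|) ∧
        (b = 1 → |w' (Fin.mk (d - 1) (by omega))| ≤ |w (Fin.mk (d - 1) (by omega))|) := by
  set k : Fin d := Fin.mk (d - 1) (by omega) with hk
  set a : ℝ := w k with ha
  have key : ∀ (v : EuclideanSpace ℝ (Fin d)) (t : ℝ),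
      (inner ℝ v (EuclideanSpace.single k t) : ℝ) = t * v k := by
    intro v t
    simpa using EuclideanSpace.inner_single_right (𝕜 := ℝ) k t v
  -- helper: sign equality when ratio positive
  have signeq : ∀ c : ℝ, 0 < c / a → Real.sign c = Real.sign a := by
    intro c hc
    rcases lt_or_gt_of_ne hwd with hneg | hpos
    · have : c < 0 := by
        by_contra h
        push_neg at h
        have : c / a ≤ 0 := div_nonpos_of_nonneg_of_nonpos h hneg.le
        linarith
      rw [Real.sign_of_neg this, Real.sign_of_neg hneg]
    · have : 0 < c := by
        by_contra h
        push_neg at h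
        have : c / a ≤ 0 := div_nonpos_of_nonpos_of_nonneg h hpos.le
        linarith
      rw [Real.sign_of_pos this, Real.sign_of_pos hpos]
  rcases hb with hb | hb
  · -- b = -1
    refine ⟨(EuclideanSpace.single k 0, false), (EuclideanSpace.single k (1/a), true),
      (EuclideanSpace.single k (1/a), true), ?_, ?_⟩
    · intro p hp
      simp only [Set.mem_insert_iff, Set.mem_singleton_iff] at hp
      rcases hp with rfl | rfl | rfl <;>
        constructor <;> intro h <;> simp_all [Set.mem_setOf_eq, key] <;>
        field_simp <;> linarith
    · intro w' b' hb' hcons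
      have h1 := (hcons (EuclideanSpace.single k 0, false) (by simp)).2 rfl
      have h2 := (hcons (EuclideanSpace.single k (1/a), true) (by simp)).1 rfl
      simp only [Set.mem_setOf_eq, key] at h1 h2
      push_neg at h1
      have hb'' : b' = -1 := by rcases hb' with h|h|h <;> simp_all <;> linarith
      subst hb''
      have hr : 1 ≤ w' k / a := by
        have : 1 ≤ (1/a) * w' k := by linarith
        calc 1 ≤ (1/a) * w' k := this
        _ = w' k / a := by ring
      have hsgn := signeq (w' k) (by linarith)
      refine ⟨hb.symm, hsgn, fun _ => ?_, fun h => by rw [hb] at h; norm_num at h⟩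
      have : |w' k / a| ≥ 1 := le_abs_self _ |>.trans' hr
      rw [abs_div] at this
      rw [ge_iff_le, le_div_iff₀ (abs_pos.mpr hwd)] at this
      linarith
  · -- b = 1
    refine ⟨(EuclideanSpace.single k 0, true), (EuclideanSpace.single k (-1/a), true),
      (EuclideanSpace.single k (-2/a), false), ?_, ?_⟩
    · intro p hp
      simp only [Set.mem_insert_iff, Set.mem_singleton_iff] at hp
      rcases hp with rfl | rfl | rfl <;>
        constructor <;> intro h <;> simp_all [Set.mem_setOf_eq, key] <;>
        field_simp <;> linarith
    · intro w' b' hb' hcons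
      have h1 := (hcons (EuclideanSpace.single k 0, true) (by simp)).1 rfl
      have h2 := (hcons (EuclideanSpace.single k (-1/a), true) (by simp)).1 rfl
      have h3 := (hcons (EuclideanSpace.single k (-2/a), false) (by simp)).2 rfl
      simp only [Set.mem_setOf_eq, key] at h1 h2 h3
      push_neg at h3
      have e2 : w' k / a ≤ b' := by
        have : (-1/a) * w' k = -(w' k / a) := by ring
        rw [this] at h2; linarith
      have e3 : b' < 2 * (w' k / a) := by
        have : (-2/a) * w' k = -(2 * (w' k / a)) := by ring
        rw [this] at h3; linarith
      have hb'' : b' = 1 := by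
        rcases hb' with h|h|h
        · simp_all; linarith
        · subst h; linarith
        · exact h
      subst hb''
      have hr1 : w' k / a ≤ 1 := e2
      have hr2 : 1/2 < w' k / a := by linarith
      have hsgn := signeq (w' k) (by linarith)
      refine ⟨hb.symm, hsgn, fun h => by rw [hb] at h; norm_num at h, fun _ => ?_⟩
      have habs : |w' k / a| ≤ 1 := abs_le.mpr ⟨by linarith, hr1⟩
      rw [abs_div, div_le_one (abs_pos.mpr hwd)] at habs
      linarith

end PBT
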